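/- arXiv:2101.04249 — 2 statements merged into one kernel-verified Lean document; each statement's English description precedes it below -/
import Mathlib

section
/- Fix s > 0 (the single-beam SNR |h|²P_T/N_r), δ ∈ (0, 1] (relative amplitude of the reflected path), and blockage probability β ∈ [0, 1). Define the single-beam average throughput C_sb = (1−β)·log₂(1+s) and the two-beam average throughput C_mb = (1−β)²·log₂(1+(1+δ²)s) + β(1−β)·log₂(1+s) + β(1−β)·log₂(1+δ²s). Then C_mb > C_sb. -/
/-- For single-beam SNR `s > 0`, reflected-path relative amplitude
`δ ∈ (0,1]`, and blockage probability `β ∈ [0,1)`, the two-beam average throughput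
`C_mb = (1−β)²log₂(1+(1+δ²)s) + β(1−β)log₂(1+s) + β(1−β)log₂(1+δ²s)` strictly exceeds
the single-beam average throughput `C_sb = (1−β)log₂(1+s)`. -/
theorem stmt_4 (s δ β : ℝ) (hs : 0 < s) (hδ0 : 0 < δ) (hδ1 : δ ≤ 1)
    (hβ0 : 0 ≤ β) (hβ1 : β < 1) :
    (1 - β) * Real.logb 2 (1 + s) <
      (1 - β) ^ 2 * Real.logb 2 (1 + (1 + δ ^ 2) * s)
        + β * (1 - β) * Real.logb 2 (1 + s)
        + β * (1 - β) * Real.logb 2 (1 + δ ^ 2 * s) := by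
  have hb1 : (0:ℝ) < 1 - β := by linarith
  have hδ2 : 0 < δ ^ 2 := by positivity
  have hab : Real.logb 2 (1 + s) < Real.logb 2 (1 + (1 + δ ^ 2) * s) :=
    Real.logb_lt_logb one_lt_two (by linarith) (by nlinarith)
  have hc : 0 ≤ Real.logb 2 (1 + δ ^ 2 * s) :=
    Real.logb_nonneg one_lt_two (by nlinarith)
  nlinarith [mul_pos (mul_pos hb1 hb1) (sub_pos.2 hab),
    mul_nonneg (mul_nonneg hβ0 hb1.le) hc]
end

section
/- Consider a two-path channel with direct-path gain g ∈ ℂ, g ≠ 0, and reflected-path gain g·δ·e^{iς} with 0 < δ < 1 and ς ∈ ℝ. Suppose the transmitter forms a two-lobe multi-beam with per-beam coefficient a·e^{-iς} on the second beam (correct phase ς but amplitude a ≥ 0), normalized to total radiated power one. Then the received power equals |g|²·(1 + aδ)²/(1 + a²), and this strictly exceeds the single-beam received power |g|² if and only if 0 < a < 2δ/(1 − δ²). Hence the multi-beam outperforms the single beam for every positive amplitude below the threshold 2δ/(1 − δ²), showing low sensitivity to amplitude-estimation error. -/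
/-- In a two-path channel with direct gain `g ≠ 0` and reflected gain
`g·δ·e^{iς}` (`0 < δ < 1`), a two-lobe multi-beam whose second-beam coefficient is
`a·e^{-iς}` (correct phase, amplitude `a ≥ 0`), normalized to unit total radiated power,
yields received power `|g|²(1 + aδ)²/(1 + a²)`, which strictly exceeds the single-beam
power `|g|²` iff `0 < a < 2δ/(1 − δ²)`. -/
theorem stmt_7 (g : ℂ) (hg : g ≠ 0) (δ : ℝ) (hδ0 : 0 < δ) (hδ1 : δ < 1) (ς : ℝ)
    (a : ℝ) (ha : 0 ≤ a)
    (c : ℂ) (hc : c = (a : ℂ) * Complex.exp (-(ς : ℂ) * Complex.I))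
    (P : ℝ)
    (hP : P = (‖g + c * (g * (δ : ℂ) * Complex.exp ((ς : ℂ) * Complex.I))‖) ^ 2
        / (1 + (‖c‖) ^ 2)) :
    P = (‖g‖) ^ 2 * (1 + a * δ) ^ 2 / (1 + a ^ 2) ∧
    (P > (‖g‖) ^ 2 ↔ 0 < a ∧ a < 2 * δ / (1 - δ ^ 2)) := by
  have hexp : Complex.exp (-(ς : ℂ) * Complex.I) * Complex.exp ((ς : ℂ) * Complex.I) = 1 := by
    rw [← Complex.exp_add]; ring_nf; exact Complex.exp_zero
  have habsc : ‖c‖ = a := by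
    rw [hc, norm_mul, Complex.norm_exp]
    simp [Complex.norm_of_nonneg ha, ha]
  have hnum : g + c * (g * (δ : ℂ) * Complex.exp ((ς : ℂ) * Complex.I))
      = g * (((1 : ℝ) + a * δ : ℝ) : ℂ) := by
    rw [hc]
    have : (a : ℂ) * Complex.exp (-(ς : ℂ) * Complex.I) * (g * (δ : ℂ) * Complex.exp ((ς : ℂ) * Complex.I))
        = g * (δ : ℂ) * (a:ℂ) * (Complex.exp (-(ς : ℂ) * Complex.I) * Complex.exp ((ς : ℂ) * Complex.I)) := by
      ring
    rw [this, hexp]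
    push_cast
    ring
  have h1aδ : (0:ℝ) ≤ 1 + a * δ := by positivity
  have hPval : P = (‖g‖) ^ 2 * (1 + a * δ) ^ 2 / (1 + a ^ 2) := by
    rw [hP, hnum, habsc, norm_mul, Complex.norm_of_nonneg h1aδ]
    ring
  refine ⟨hPval, ?_⟩
  have hg2 : (0:ℝ) < (‖g‖) ^ 2 := pow_pos (norm_pos_iff.mpr hg) 2
  have hden : (0:ℝ) < 1 + a ^ 2 := by positivity
  have h1δ2 : (0:ℝ) < 1 - δ ^ 2 := by nlinarith
  rw [hPval, gt_iff_lt, lt_div_iff₀ hden]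
  constructor
  · intro h
    have key : a * (2 * δ - a * (1 - δ ^ 2)) > 0 := by nlinarith
    have ha0 : 0 < a := by
      by_contra h'
      push_neg at h'
      have : a = 0 := le_antisymm h' ha
      rw [this] at key; linarith
    refine ⟨ha0, ?_⟩
    have h2 : 0 < 2 * δ - a * (1 - δ ^ 2) := by
      rcases lt_or_ge 0 (2 * δ - a * (1 - δ ^ 2)) with h'|h'
      · exact h'
      · nlinarith
    rw [lt_div_iff₀ h1δ2]; nlinarith
  · rintro ⟨ha0, halt⟩
    rw [lt_div_iff₀ h1δ2] at halt
    have h' : (0:ℝ) < 2 * δ - a * (1 - δ ^ 2) := by linarith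
    nlinarith [mul_pos hg2 (mul_pos ha0 h')]
end
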